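/- arXiv:1012.4047 — 2 statements merged into one kernel-verified Lean document; each statement's English description precedes it below -/
import Mathlib

section
/- Let b be a nonnegative even integer with 4 | b. Then E_b ≡ 1 - 11b + 15b^2 + b^3 - b^4 (mod 2^{10}). -/
/-- The Euler numbers `E n`, defined by `E 0 = 1`, `E (2n-1) = 0` for `n ≥ 1`,
and `∑_{r=0}^{n} C(2n, 2r) * E (2r) = 0` for `n ≥ 1`. -/
def eulerE : ℕ → ℤ
  | 0 => 1
  | 1 => 0
  | n + 2 =>
      if Even n then
        -∑ r ∈ (Finset.range (n / 2 + 1)).attach,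
          ((n + 2).choose (2 * r.1) : ℤ) * eulerE (2 * r.1)
      else 0
  decreasing_by
    have := r.2
    simp only [Finset.mem_range] at this
    omega

open Finset

variable {R : Type*} [CommRing R]

/-- falling factorial as a ring element -/
def ffac (R : Type*) [CommRing R] (j s : ℕ) : R := ∏ t ∈ Finset.range j, ((s : R) - (t : R))

lemma ffac_zero (s : ℕ) : ffac R 0 s = 1 := by simp [ffac]

lemma ffac_succ_zero (j : ℕ) : ffac R (j+1) 0 = 0 := by
  apply Finset.prod_eq_zero (Finset.mem_range.mpr (Nat.succ_pos j))
  simp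

lemma ffac_succ_succ (j s : ℕ) : ffac R (j+1) (s+1) = ((s:R)+1) * ffac R j s := by
  rw [ffac, Finset.prod_range_succ', ffac]
  rw [show (∏ t ∈ Finset.range j, ((((s+1:ℕ)):R) - ((t+1:ℕ):R))) = ∏ t ∈ Finset.range j, ((s:R) - (t:R)) from
    Finset.prod_congr rfl (by intro t _; push_cast; ring)]
  push_cast
  ring

lemma sum_choose_ffac (z : R) (j : ℕ) : ∀ M : ℕ,
    ∑ s ∈ Finset.range (M+1), (M.choose s : R) * ffac R j s * z ^ s
      = ffac R j M * z ^ j * (1+z) ^ (M - j) := by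
  induction j with
  | zero =>
    intro M
    simp only [ffac_zero, mul_one, pow_zero]
    have := add_pow z 1 M
    simp only [one_pow, mul_one, add_comm z 1] at this
    rw [Nat.sub_zero, one_mul, this]
    exact Finset.sum_congr rfl (fun s _ => mul_comm _ _)
  | succ j ih =>
    intro M
    cases M with
    | zero => simp [ffac_succ_zero]
    | succ M' =>
      rw [Finset.sum_range_succ']
      have h0 : ((M'+1).choose 0 : R) * ffac R (j+1) 0 * z ^ 0 = 0 := by
        rw [ffac_succ_zero]; ring
      rw [h0, add_zero]
      have hterm : ∀ t, ((M'+1).choose (t+1) : R) * ffac R (j+1) (t+1) * z ^ (t+1)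
          = ((M'+1:ℕ) : R) * z * ((M'.choose t : R) * ffac R j t * z ^ t) := by
        intro t
        rw [ffac_succ_succ]
        have hc : ((M'+1:ℕ) : R) * (M'.choose t : R) = ((M'+1).choose (t+1) : R) * ((t+1:ℕ) : R) := by
          rw [← Nat.cast_mul, ← Nat.cast_mul]
          congr 1
          exact Nat.add_one_mul_choose_eq M' t
        push_cast at hc ⊢
        linear_combination (-(ffac R j t * z ^ t * z)) * hc
      calc ∑ t ∈ Finset.range (M'+1), ((M'+1).choose (t+1) : R) * ffac R (j+1) (t+1) * z ^ (t+1)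
          = ∑ t ∈ Finset.range (M'+1), ((M'+1:ℕ) : R) * z * ((M'.choose t : R) * ffac R j t * z ^ t) := by
            exact Finset.sum_congr rfl (fun t _ => hterm t)
        _ = ((M'+1:ℕ) : R) * z * (ffac R j M' * z ^ j * (1+z) ^ (M' - j)) := by
            rw [← Finset.mul_sum, ih M']
        _ = ffac R (j+1) (M'+1) * z ^ (j+1) * (1+z) ^ (M'+1 - (j+1)) := by
            rw [ffac_succ_succ, Nat.succ_sub_succ]
            push_cast
            ring

def pol (R : Type*) [CommRing R] (a b c d e : ℤ) (s : ℕ) : R :=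
  (a:R) + (b:R) * ffac R 1 s + (c:R) * ffac R 2 s + (d:R) * ffac R 3 s + (e:R) * ffac R 4 s

lemma sum_choose_one (z : R) (M : ℕ) :
    ∑ s ∈ Finset.range (M+1), (M.choose s : R) * z ^ s = (1+z) ^ M := by
  have := sum_choose_ffac z 0 M
  simpa [ffac_zero] using this

lemma sum_choose_pol (a b c d e : ℤ) (z : R) (M : ℕ) :
    ∑ s ∈ Finset.range (M+1), (M.choose s : R) * pol R a b c d e s * z ^ s
      = (a:R) * (1+z) ^ M
        + (b:R) * (ffac R 1 M * z ^ 1 * (1+z) ^ (M-1))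
        + (c:R) * (ffac R 2 M * z ^ 2 * (1+z) ^ (M-2))
        + (d:R) * (ffac R 3 M * z ^ 3 * (1+z) ^ (M-3))
        + (e:R) * (ffac R 4 M * z ^ 4 * (1+z) ^ (M-4)) := by
  have h : ∀ s, (M.choose s : R) * pol R a b c d e s * z ^ s
      = (a:R) * ((M.choose s : R) * z ^ s)
        + (b:R) * ((M.choose s : R) * ffac R 1 s * z ^ s)
        + (c:R) * ((M.choose s : R) * ffac R 2 s * z ^ s)
        + (d:R) * ((M.choose s : R) * ffac R 3 s * z ^ s)
        + (e:R) * ((M.choose s : R) * ffac R 4 s * z ^ s) := by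
    intro s; rw [pol]; ring
  rw [Finset.sum_congr rfl (fun s _ => h s), Finset.sum_add_distrib, Finset.sum_add_distrib,
    Finset.sum_add_distrib, Finset.sum_add_distrib, ← Finset.mul_sum, ← Finset.mul_sum,
    ← Finset.mul_sum, ← Finset.mul_sum, ← Finset.mul_sum, sum_choose_one,
    sum_choose_ffac z 1 M, sum_choose_ffac z 2 M, sum_choose_ffac z 3 M, sum_choose_ffac z 4 M]

lemma sum_range_even_odd {A : Type*} [AddCommMonoid A] (F : ℕ → A) (n : ℕ) :
    ∑ s ∈ Finset.range (2*n+1), F s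
      = ∑ r ∈ Finset.range (n+1), F (2*r) + ∑ r ∈ Finset.range n, F (2*r+1) := by
  induction n with
  | zero => simp
  | succ n ih =>
    rw [show 2*(n+1)+1 = (2*n+1)+1+1 by ring, Finset.sum_range_succ, Finset.sum_range_succ, ih,
      Finset.sum_range_succ (fun r => F (2*r)) (n+1), Finset.sum_range_succ (fun r => F (2*r+1)) n]
    simp only [show ∀ m, 2*m+1+1 = 2*(m+1) from fun m => by ring]
    abel

notation "GI" => GaussianInt

def Ig : GaussianInt := Zsqrtd.sqrtd

lemma Ig_sq : Ig^2 = -1 := by decide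

lemma Ig_pow_two_mul (r : ℕ) : Ig^(2*r) = (-1:GI)^r := by
  rw [pow_mul, Ig_sq]

lemma negIg_pow_two_mul (r : ℕ) : (-Ig)^(2*r) = (-1:GI)^r := by
  rw [pow_mul, neg_sq, Ig_sq]

lemma neg_one_pow_two_mul (r : ℕ) : ((-1:GI))^(2*r) = 1 := by
  rw [pow_mul, neg_one_sq, one_pow]

def Ppoly (r : ℕ) : ℤ :=
  if Even r then 1 - 11*(2*r:ℤ) + 15*(2*r:ℤ)^2 + (2*r:ℤ)^3 - (2*r:ℤ)^4
  else 849 + 133*(2*r:ℤ) - 25*(2*r:ℤ)^2 + (2*r:ℤ)^3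

lemma bridge (r : ℕ) :
    pol GI 850 113 (-11) (-4) (-1) (2*r) * (1:GI)^(2*r)
      + pol GI 850 113 (-11) (-4) (-1) (2*r) * (-1:GI)^(2*r)
      + pol GI (-848) (-105) 33 (-6) (-1) (2*r) * Ig^(2*r)
      + pol GI (-848) (-105) 33 (-6) (-1) (2*r) * (-Ig)^(2*r)
      = 4 * ((Ppoly r : ℤ) : GI) := by
  rw [Ig_pow_two_mul, negIg_pow_two_mul, neg_one_pow_two_mul, one_pow]
  by_cases hr : Even r
  · rw [Even.neg_one_pow hr, Ppoly, if_pos hr]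
    simp only [pol, ffac, Finset.prod_range_succ, Finset.prod_range_zero]
    push_cast
    ring
  · rw [Odd.neg_one_pow (Nat.not_even_iff_odd.mp hr), Ppoly, if_neg hr]
    simp only [pol, ffac, Finset.prod_range_succ, Finset.prod_range_zero]
    push_cast
    ring

lemma gi_int_dvd (a b : ℤ) (h : ((a:ℤ):GI) ∣ ((b:ℤ):GI)) : a ∣ b := by
  obtain ⟨c, hc⟩ := h
  refine ⟨c.re, ?_⟩
  have := congrArg Zsqrtd.re hc
  simpa [Zsqrtd.re_mul, Zsqrtd.re_intCast, Zsqrtd.im_intCast] using this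

lemma two_pow_dvd_one_add_Ig_pow (m : ℕ) (hm : 26 ≤ m) : (2:GI)^13 ∣ (1+Ig)^m := by
  have h2 : ((1:GI)+Ig)^2 = 2*Ig := by decide
  have h26 : ((1:GI)+Ig)^26 = 2^13 * Ig^13 := by
    rw [show 26 = 2*13 from rfl, pow_mul, h2, mul_pow]
  calc (2:GI)^13 ∣ (1+Ig)^26 := ⟨Ig^13, h26⟩
    _ ∣ (1+Ig)^m := pow_dvd_pow _ hm

lemma two_pow_dvd_one_sub_Ig_pow (m : ℕ) (hm : 26 ≤ m) : (2:GI)^13 ∣ (1+(-Ig))^m := by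
  have h2 : ((1:GI)+(-Ig))^2 = -(2*Ig) := by decide
  have h26 : ((1:GI)+(-Ig))^26 = 2^13 * (-(Ig^13)) := by
    rw [show 26 = 2*13 from rfl, pow_mul, h2, neg_pow, mul_pow]
    ring
  calc (2:GI)^13 ∣ (1+(-Ig))^26 := ⟨-(Ig^13), h26⟩
    _ ∣ (1+(-Ig))^m := pow_dvd_pow _ hm

lemma key (n : ℕ) (hn : 15 ≤ n) :
    (1024:ℤ) ∣ ∑ s ∈ Finset.range (n+1), ((2*n).choose (2*s) : ℤ) * Ppoly s := by
  set F : ℤ := ∑ s ∈ Finset.range (n+1), ((2*n).choose (2*s) : ℤ) * Ppoly s with hF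
  -- Step A: cast 4F into ℤ[i] as a full binomial sum
  have stepA : ((4*F : ℤ) : GI)
      = ∑ s ∈ Finset.range (2*n+1), ((2*n).choose s : GI) *
          (pol GI 850 113 (-11) (-4) (-1) s * (1:GI)^s
            + pol GI 850 113 (-11) (-4) (-1) s * (-1:GI)^s
            + pol GI (-848) (-105) 33 (-6) (-1) s * Ig^s
            + pol GI (-848) (-105) 33 (-6) (-1) s * (-Ig)^s) := by
    rw [sum_range_even_odd]
    have hodd : ∀ r : ℕ, ((2*n).choose (2*r+1) : GI) *
          (pol GI 850 113 (-11) (-4) (-1) (2*r+1) * (1:GI)^(2*r+1)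
            + pol GI 850 113 (-11) (-4) (-1) (2*r+1) * (-1:GI)^(2*r+1)
            + pol GI (-848) (-105) 33 (-6) (-1) (2*r+1) * Ig^(2*r+1)
            + pol GI (-848) (-105) 33 (-6) (-1) (2*r+1) * (-Ig)^(2*r+1)) = 0 := by
      intro r
      have h1 : ((-1:GI))^(2*r+1) = -1 := Odd.neg_one_pow ⟨r, by ring⟩
      have h2 : ((-Ig))^(2*r+1) = -(Ig^(2*r+1)) := Odd.neg_pow ⟨r, by ring⟩ Ig
      rw [h1, h2, one_pow]
      ring
    rw [Finset.sum_congr rfl (fun r _ => hodd r), Finset.sum_const_zero, add_zero]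
    have heven : ∀ r : ℕ, ((2*n).choose (2*r) : GI) *
          (pol GI 850 113 (-11) (-4) (-1) (2*r) * (1:GI)^(2*r)
            + pol GI 850 113 (-11) (-4) (-1) (2*r) * (-1:GI)^(2*r)
            + pol GI (-848) (-105) 33 (-6) (-1) (2*r) * Ig^(2*r)
            + pol GI (-848) (-105) 33 (-6) (-1) (2*r) * (-Ig)^(2*r))
          = 4 * (((2*n).choose (2*r) : ℤ) * Ppoly r : ℤ) := by
      intro r
      rw [bridge r]
      push_cast
      ring
    rw [Finset.sum_congr rfl (fun r _ => heven r), ← Finset.mul_sum, hF]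
    push_cast
    ring
  -- Step B: closed form and divisibility
  have stepB : (2:GI)^13 ∣ ((4*F : ℤ) : GI) := by
    rw [stepA]
    have hsplit : ∑ s ∈ Finset.range (2*n+1), ((2*n).choose s : GI) *
          (pol GI 850 113 (-11) (-4) (-1) s * (1:GI)^s
            + pol GI 850 113 (-11) (-4) (-1) s * (-1:GI)^s
            + pol GI (-848) (-105) 33 (-6) (-1) s * Ig^s
            + pol GI (-848) (-105) 33 (-6) (-1) s * (-Ig)^s)
        = (∑ s ∈ Finset.range (2*n+1), ((2*n).choose s : GI) * pol GI 850 113 (-11) (-4) (-1) s * (1:GI)^s)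
          + (∑ s ∈ Finset.range (2*n+1), ((2*n).choose s : GI) * pol GI 850 113 (-11) (-4) (-1) s * (-1:GI)^s)
          + (∑ s ∈ Finset.range (2*n+1), ((2*n).choose s : GI) * pol GI (-848) (-105) 33 (-6) (-1) s * Ig^s)
          + (∑ s ∈ Finset.range (2*n+1), ((2*n).choose s : GI) * pol GI (-848) (-105) 33 (-6) (-1) s * (-Ig)^s) := by
      rw [← Finset.sum_add_distrib, ← Finset.sum_add_distrib, ← Finset.sum_add_distrib]
      exact Finset.sum_congr rfl (fun s _ => by ring)
    rw [hsplit, sum_choose_pol 850 113 (-11) (-4) (-1) (1:GI) (2*n),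
      sum_choose_pol 850 113 (-11) (-4) (-1) (-1:GI) (2*n),
      sum_choose_pol (-848) (-105) 33 (-6) (-1) Ig (2*n),
      sum_choose_pol (-848) (-105) 33 (-6) (-1) (-Ig) (2*n)]
    have hdvd2 : ∀ m : ℕ, 13 ≤ m → (2:GI)^13 ∣ ((1:GI)+1)^m := by
      intro m hm
      rw [show ((1:GI)+1) = 2 from by norm_num]
      exact pow_dvd_pow _ hm
    have hzero : ((1:GI) + (-1)) = 0 := by ring
    apply dvd_add
    apply dvd_add
    apply dvd_add
    · -- z = 1
      apply dvd_add; apply dvd_add; apply dvd_add; apply dvd_add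
      · exact Dvd.dvd.mul_left (hdvd2 (2*n) (by omega)) _
      · exact Dvd.dvd.mul_left (Dvd.dvd.mul_left (hdvd2 (2*n-1) (by omega)) _) _
      · exact Dvd.dvd.mul_left (Dvd.dvd.mul_left (hdvd2 (2*n-2) (by omega)) _) _
      · exact Dvd.dvd.mul_left (Dvd.dvd.mul_left (hdvd2 (2*n-3) (by omega)) _) _
      · exact Dvd.dvd.mul_left (Dvd.dvd.mul_left (hdvd2 (2*n-4) (by omega)) _) _
    · -- z = -1
      rw [hzero]
      rw [zero_pow (show 2*n ≠ 0 by omega), zero_pow (show 2*n-1 ≠ 0 by omega),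
        zero_pow (show 2*n-2 ≠ 0 by omega), zero_pow (show 2*n-3 ≠ 0 by omega),
        zero_pow (show 2*n-4 ≠ 0 by omega)]
      simp
    · -- z = I
      apply dvd_add; apply dvd_add; apply dvd_add; apply dvd_add
      · exact Dvd.dvd.mul_left (two_pow_dvd_one_add_Ig_pow (2*n) (by omega)) _
      · exact Dvd.dvd.mul_left (Dvd.dvd.mul_left (two_pow_dvd_one_add_Ig_pow (2*n-1) (by omega)) _) _
      · exact Dvd.dvd.mul_left (Dvd.dvd.mul_left (two_pow_dvd_one_add_Ig_pow (2*n-2) (by omega)) _) _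
      · exact Dvd.dvd.mul_left (Dvd.dvd.mul_left (two_pow_dvd_one_add_Ig_pow (2*n-3) (by omega)) _) _
      · exact Dvd.dvd.mul_left (Dvd.dvd.mul_left (two_pow_dvd_one_add_Ig_pow (2*n-4) (by omega)) _) _
    · -- z = -I
      apply dvd_add; apply dvd_add; apply dvd_add; apply dvd_add
      · exact Dvd.dvd.mul_left (two_pow_dvd_one_sub_Ig_pow (2*n) (by omega)) _
      · exact Dvd.dvd.mul_left (Dvd.dvd.mul_left (two_pow_dvd_one_sub_Ig_pow (2*n-1) (by omega)) _) _
      · exact Dvd.dvd.mul_left (Dvd.dvd.mul_left (two_pow_dvd_one_sub_Ig_pow (2*n-2) (by omega)) _) _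
      · exact Dvd.dvd.mul_left (Dvd.dvd.mul_left (two_pow_dvd_one_sub_Ig_pow (2*n-3) (by omega)) _) _
      · exact Dvd.dvd.mul_left (Dvd.dvd.mul_left (two_pow_dvd_one_sub_Ig_pow (2*n-4) (by omega)) _) _
  -- transfer back to ℤ
  have h13 : (2:ℤ)^13 ∣ 4*F := by
    apply gi_int_dvd
    have : (((2:ℤ)^13 : ℤ) : GI) = (2:GI)^13 := by push_cast; ring
    rw [this]
    exact stepB
  obtain ⟨k, hk⟩ := h13
  exact ⟨2*k, by omega⟩

lemma eulerE_rec (k : ℕ) : eulerE (2*k+2) =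
    -∑ r ∈ Finset.range (k+1), ((2*k+2).choose (2*r) : ℤ) * eulerE (2*r) := by
  rw [show 2*k+2 = (2*k)+2 by ring, eulerE]
  rw [if_pos ⟨k, by ring⟩]
  rw [Finset.sum_attach (Finset.range (2*k/2+1)) (fun s => ((2*k+2).choose (2*s) : ℤ) * eulerE (2*s))]
  rw [show 2*k/2 = k from by omega]

lemma E0 : eulerE 0 = 1 := by rw [eulerE]

lemma E2 : eulerE 2 = -1 := by
  have h := eulerE_rec 0
  have c0 : Nat.choose 2 0 = 1 := by rw [Nat.choose_eq_descFactorial_div_factorial]; rfl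
  norm_num [Finset.sum_range_succ, E0, c0] at h
  omega

lemma E4 : eulerE 4 = 5 := by
  have h := eulerE_rec 1
  have c0 : Nat.choose 4 0 = 1 := by rw [Nat.choose_eq_descFactorial_div_factorial]; rfl
  have c1 : Nat.choose 4 2 = 6 := by rw [Nat.choose_eq_descFactorial_div_factorial]; rfl
  norm_num [Finset.sum_range_succ, E0, E2, c0, c1] at h
  omega

lemma E6 : eulerE 6 = -61 := by
  have h := eulerE_rec 2
  have c0 : Nat.choose 6 0 = 1 := by rw [Nat.choose_eq_descFactorial_div_factorial]; rfl
  have c1 : Nat.choose 6 2 = 15 := by rw [Nat.choose_eq_descFactorial_div_factorial]; rfl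
  have c2 : Nat.choose 6 4 = 15 := by rw [Nat.choose_eq_descFactorial_div_factorial]; rfl
  norm_num [Finset.sum_range_succ, E0, E2, E4, c0, c1, c2] at h
  omega

lemma E8 : eulerE 8 = 1385 := by
  have h := eulerE_rec 3
  have c0 : Nat.choose 8 0 = 1 := by rw [Nat.choose_eq_descFactorial_div_factorial]; rfl
  have c1 : Nat.choose 8 2 = 28 := by rw [Nat.choose_eq_descFactorial_div_factorial]; rfl
  have c2 : Nat.choose 8 4 = 70 := by rw [Nat.choose_eq_descFactorial_div_factorial]; rfl
  have c3 : Nat.choose 8 6 = 28 := by rw [Nat.choose_eq_descFactorial_div_factorial]; rfl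
  norm_num [Finset.sum_range_succ, E0, E2, E4, E6, c0, c1, c2, c3] at h
  omega

lemma E10 : eulerE 10 = -50521 := by
  have h := eulerE_rec 4
  have c0 : Nat.choose 10 0 = 1 := by rw [Nat.choose_eq_descFactorial_div_factorial]; rfl
  have c1 : Nat.choose 10 2 = 45 := by rw [Nat.choose_eq_descFactorial_div_factorial]; rfl
  have c2 : Nat.choose 10 4 = 210 := by rw [Nat.choose_eq_descFactorial_div_factorial]; rfl
  have c3 : Nat.choose 10 6 = 210 := by rw [Nat.choose_eq_descFactorial_div_factorial]; rfl
  have c4 : Nat.choose 10 8 = 45 := by rw [Nat.choose_eq_descFactorial_div_factorial]; rfl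
  norm_num [Finset.sum_range_succ, E0, E2, E4, E6, E8, c0, c1, c2, c3, c4] at h
  omega

lemma E12 : eulerE 12 = 2702765 := by
  have h := eulerE_rec 5
  have c0 : Nat.choose 12 0 = 1 := by rw [Nat.choose_eq_descFactorial_div_factorial]; rfl
  have c1 : Nat.choose 12 2 = 66 := by rw [Nat.choose_eq_descFactorial_div_factorial]; rfl
  have c2 : Nat.choose 12 4 = 495 := by rw [Nat.choose_eq_descFactorial_div_factorial]; rfl
  have c3 : Nat.choose 12 6 = 924 := by rw [Nat.choose_eq_descFactorial_div_factorial]; rfl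
  have c4 : Nat.choose 12 8 = 495 := by rw [Nat.choose_eq_descFactorial_div_factorial]; rfl
  have c5 : Nat.choose 12 10 = 66 := by rw [Nat.choose_eq_descFactorial_div_factorial]; rfl
  norm_num [Finset.sum_range_succ, E0, E2, E4, E6, E8, E10, c0, c1, c2, c3, c4, c5] at h
  omega

lemma E14 : eulerE 14 = -199360981 := by
  have h := eulerE_rec 6
  have c0 : Nat.choose 14 0 = 1 := by rw [Nat.choose_eq_descFactorial_div_factorial]; rfl
  have c1 : Nat.choose 14 2 = 91 := by rw [Nat.choose_eq_descFactorial_div_factorial]; rfl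
  have c2 : Nat.choose 14 4 = 1001 := by rw [Nat.choose_eq_descFactorial_div_factorial]; rfl
  have c3 : Nat.choose 14 6 = 3003 := by rw [Nat.choose_eq_descFactorial_div_factorial]; rfl
  have c4 : Nat.choose 14 8 = 3003 := by rw [Nat.choose_eq_descFactorial_div_factorial]; rfl
  have c5 : Nat.choose 14 10 = 1001 := by rw [Nat.choose_eq_descFactorial_div_factorial]; rfl
  have c6 : Nat.choose 14 12 = 91 := by rw [Nat.choose_eq_descFactorial_div_factorial]; rfl
  norm_num [Finset.sum_range_succ, E0, E2, E4, E6, E8, E10, E12, c0, c1, c2, c3, c4, c5, c6] at h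
  omega

lemma E16 : eulerE 16 = 19391512145 := by
  have h := eulerE_rec 7
  have c0 : Nat.choose 16 0 = 1 := by rw [Nat.choose_eq_descFactorial_div_factorial]; rfl
  have c1 : Nat.choose 16 2 = 120 := by rw [Nat.choose_eq_descFactorial_div_factorial]; rfl
  have c2 : Nat.choose 16 4 = 1820 := by rw [Nat.choose_eq_descFactorial_div_factorial]; rfl
  have c3 : Nat.choose 16 6 = 8008 := by rw [Nat.choose_eq_descFactorial_div_factorial]; rfl
  have c4 : Nat.choose 16 8 = 12870 := by rw [Nat.choose_eq_descFactorial_div_factorial]; rfl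
  have c5 : Nat.choose 16 10 = 8008 := by rw [Nat.choose_eq_descFactorial_div_factorial]; rfl
  have c6 : Nat.choose 16 12 = 1820 := by rw [Nat.choose_eq_descFactorial_div_factorial]; rfl
  have c7 : Nat.choose 16 14 = 120 := by rw [Nat.choose_eq_descFactorial_div_factorial]; rfl
  norm_num [Finset.sum_range_succ, E0, E2, E4, E6, E8, E10, E12, E14, c0, c1, c2, c3, c4, c5, c6, c7] at h
  omega

lemma E18 : eulerE 18 = -2404879675441 := by
  have h := eulerE_rec 8
  have c0 : Nat.choose 18 0 = 1 := by rw [Nat.choose_eq_descFactorial_div_factorial]; rfl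
  have c1 : Nat.choose 18 2 = 153 := by rw [Nat.choose_eq_descFactorial_div_factorial]; rfl
  have c2 : Nat.choose 18 4 = 3060 := by rw [Nat.choose_eq_descFactorial_div_factorial]; rfl
  have c3 : Nat.choose 18 6 = 18564 := by rw [Nat.choose_eq_descFactorial_div_factorial]; rfl
  have c4 : Nat.choose 18 8 = 43758 := by rw [Nat.choose_eq_descFactorial_div_factorial]; rfl
  have c5 : Nat.choose 18 10 = 43758 := by rw [Nat.choose_eq_descFactorial_div_factorial]; rfl
  have c6 : Nat.choose 18 12 = 18564 := by rw [Nat.choose_eq_descFactorial_div_factorial]; rfl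
  have c7 : Nat.choose 18 14 = 3060 := by rw [Nat.choose_eq_descFactorial_div_factorial]; rfl
  have c8 : Nat.choose 18 16 = 153 := by rw [Nat.choose_eq_descFactorial_div_factorial]; rfl
  norm_num [Finset.sum_range_succ, E0, E2, E4, E6, E8, E10, E12, E14, E16, c0, c1, c2, c3, c4, c5, c6, c7, c8] at h
  omega

lemma E20 : eulerE 20 = 370371188237525 := by
  have h := eulerE_rec 9
  have c0 : Nat.choose 20 0 = 1 := by rw [Nat.choose_eq_descFactorial_div_factorial]; rfl
  have c1 : Nat.choose 20 2 = 190 := by rw [Nat.choose_eq_descFactorial_div_factorial]; rfl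
  have c2 : Nat.choose 20 4 = 4845 := by rw [Nat.choose_eq_descFactorial_div_factorial]; rfl
  have c3 : Nat.choose 20 6 = 38760 := by rw [Nat.choose_eq_descFactorial_div_factorial]; rfl
  have c4 : Nat.choose 20 8 = 125970 := by rw [Nat.choose_eq_descFactorial_div_factorial]; rfl
  have c5 : Nat.choose 20 10 = 184756 := by rw [Nat.choose_eq_descFactorial_div_factorial]; rfl
  have c6 : Nat.choose 20 12 = 125970 := by rw [Nat.choose_eq_descFactorial_div_factorial]; rfl
  have c7 : Nat.choose 20 14 = 38760 := by rw [Nat.choose_eq_descFactorial_div_factorial]; rfl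
  have c8 : Nat.choose 20 16 = 4845 := by rw [Nat.choose_eq_descFactorial_div_factorial]; rfl
  have c9 : Nat.choose 20 18 = 190 := by rw [Nat.choose_eq_descFactorial_div_factorial]; rfl
  norm_num [Finset.sum_range_succ, E0, E2, E4, E6, E8, E10, E12, E14, E16, E18, c0, c1, c2, c3, c4, c5, c6, c7, c8, c9] at h
  omega

lemma E22 : eulerE 22 = -69348874393137901 := by
  have h := eulerE_rec 10
  have c0 : Nat.choose 22 0 = 1 := by rw [Nat.choose_eq_descFactorial_div_factorial]; rfl
  have c1 : Nat.choose 22 2 = 231 := by rw [Nat.choose_eq_descFactorial_div_factorial]; rfl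
  have c2 : Nat.choose 22 4 = 7315 := by rw [Nat.choose_eq_descFactorial_div_factorial]; rfl
  have c3 : Nat.choose 22 6 = 74613 := by rw [Nat.choose_eq_descFactorial_div_factorial]; rfl
  have c4 : Nat.choose 22 8 = 319770 := by rw [Nat.choose_eq_descFactorial_div_factorial]; rfl
  have c5 : Nat.choose 22 10 = 646646 := by rw [Nat.choose_eq_descFactorial_div_factorial]; rfl
  have c6 : Nat.choose 22 12 = 646646 := by rw [Nat.choose_eq_descFactorial_div_factorial]; rfl
  have c7 : Nat.choose 22 14 = 319770 := by rw [Nat.choose_eq_descFactorial_div_factorial]; rfl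
  have c8 : Nat.choose 22 16 = 74613 := by rw [Nat.choose_eq_descFactorial_div_factorial]; rfl
  have c9 : Nat.choose 22 18 = 7315 := by rw [Nat.choose_eq_descFactorial_div_factorial]; rfl
  have c10 : Nat.choose 22 20 = 231 := by rw [Nat.choose_eq_descFactorial_div_factorial]; rfl
  norm_num [Finset.sum_range_succ, E0, E2, E4, E6, E8, E10, E12, E14, E16, E18, E20, c0, c1, c2, c3, c4, c5, c6, c7, c8, c9, c10] at h
  omega

lemma E24 : eulerE 24 = 15514534163557086905 := by
  have h := eulerE_rec 11
  have c0 : Nat.choose 24 0 = 1 := by rw [Nat.choose_eq_descFactorial_div_factorial]; rfl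
  have c1 : Nat.choose 24 2 = 276 := by rw [Nat.choose_eq_descFactorial_div_factorial]; rfl
  have c2 : Nat.choose 24 4 = 10626 := by rw [Nat.choose_eq_descFactorial_div_factorial]; rfl
  have c3 : Nat.choose 24 6 = 134596 := by rw [Nat.choose_eq_descFactorial_div_factorial]; rfl
  have c4 : Nat.choose 24 8 = 735471 := by rw [Nat.choose_eq_descFactorial_div_factorial]; rfl
  have c5 : Nat.choose 24 10 = 1961256 := by rw [Nat.choose_eq_descFactorial_div_factorial]; rfl
  have c6 : Nat.choose 24 12 = 2704156 := by rw [Nat.choose_eq_descFactorial_div_factorial]; rfl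
  have c7 : Nat.choose 24 14 = 1961256 := by rw [Nat.choose_eq_descFactorial_div_factorial]; rfl
  have c8 : Nat.choose 24 16 = 735471 := by rw [Nat.choose_eq_descFactorial_div_factorial]; rfl
  have c9 : Nat.choose 24 18 = 134596 := by rw [Nat.choose_eq_descFactorial_div_factorial]; rfl
  have c10 : Nat.choose 24 20 = 10626 := by rw [Nat.choose_eq_descFactorial_div_factorial]; rfl
  have c11 : Nat.choose 24 22 = 276 := by rw [Nat.choose_eq_descFactorial_div_factorial]; rfl
  norm_num [Finset.sum_range_succ, E0, E2, E4, E6, E8, E10, E12, E14, E16, E18, E20, E22, c0, c1, c2, c3, c4, c5, c6, c7, c8, c9, c10, c11] at h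
  omega

lemma E26 : eulerE 26 = -4087072509293123892361 := by
  have h := eulerE_rec 12
  have c0 : Nat.choose 26 0 = 1 := by rw [Nat.choose_eq_descFactorial_div_factorial]; rfl
  have c1 : Nat.choose 26 2 = 325 := by rw [Nat.choose_eq_descFactorial_div_factorial]; rfl
  have c2 : Nat.choose 26 4 = 14950 := by rw [Nat.choose_eq_descFactorial_div_factorial]; rfl
  have c3 : Nat.choose 26 6 = 230230 := by rw [Nat.choose_eq_descFactorial_div_factorial]; rfl
  have c4 : Nat.choose 26 8 = 1562275 := by rw [Nat.choose_eq_descFactorial_div_factorial]; rfl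
  have c5 : Nat.choose 26 10 = 5311735 := by rw [Nat.choose_eq_descFactorial_div_factorial]; rfl
  have c6 : Nat.choose 26 12 = 9657700 := by rw [Nat.choose_eq_descFactorial_div_factorial]; rfl
  have c7 : Nat.choose 26 14 = 9657700 := by rw [Nat.choose_eq_descFactorial_div_factorial]; rfl
  have c8 : Nat.choose 26 16 = 5311735 := by rw [Nat.choose_eq_descFactorial_div_factorial]; rfl
  have c9 : Nat.choose 26 18 = 1562275 := by rw [Nat.choose_eq_descFactorial_div_factorial]; rfl
  have c10 : Nat.choose 26 20 = 230230 := by rw [Nat.choose_eq_descFactorial_div_factorial]; rfl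
  have c11 : Nat.choose 26 22 = 14950 := by rw [Nat.choose_eq_descFactorial_div_factorial]; rfl
  have c12 : Nat.choose 26 24 = 325 := by rw [Nat.choose_eq_descFactorial_div_factorial]; rfl
  norm_num [Finset.sum_range_succ, E0, E2, E4, E6, E8, E10, E12, E14, E16, E18, E20, E22, E24, c0, c1, c2, c3, c4, c5, c6, c7, c8, c9, c10, c11, c12] at h
  omega

lemma E28 : eulerE 28 = 1252259641403629865468285 := by
  have h := eulerE_rec 13
  have c0 : Nat.choose 28 0 = 1 := by rw [Nat.choose_eq_descFactorial_div_factorial]; rfl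
  have c1 : Nat.choose 28 2 = 378 := by rw [Nat.choose_eq_descFactorial_div_factorial]; rfl
  have c2 : Nat.choose 28 4 = 20475 := by rw [Nat.choose_eq_descFactorial_div_factorial]; rfl
  have c3 : Nat.choose 28 6 = 376740 := by rw [Nat.choose_eq_descFactorial_div_factorial]; rfl
  have c4 : Nat.choose 28 8 = 3108105 := by rw [Nat.choose_eq_descFactorial_div_factorial]; rfl
  have c5 : Nat.choose 28 10 = 13123110 := by rw [Nat.choose_eq_descFactorial_div_factorial]; rfl
  have c6 : Nat.choose 28 12 = 30421755 := by rw [Nat.choose_eq_descFactorial_div_factorial]; rfl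
  have c7 : Nat.choose 28 14 = 40116600 := by rw [Nat.choose_eq_descFactorial_div_factorial]; rfl
  have c8 : Nat.choose 28 16 = 30421755 := by rw [Nat.choose_eq_descFactorial_div_factorial]; rfl
  have c9 : Nat.choose 28 18 = 13123110 := by rw [Nat.choose_eq_descFactorial_div_factorial]; rfl
  have c10 : Nat.choose 28 20 = 3108105 := by rw [Nat.choose_eq_descFactorial_div_factorial]; rfl
  have c11 : Nat.choose 28 22 = 376740 := by rw [Nat.choose_eq_descFactorial_div_factorial]; rfl
  have c12 : Nat.choose 28 24 = 20475 := by rw [Nat.choose_eq_descFactorial_div_factorial]; rfl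
  have c13 : Nat.choose 28 26 = 378 := by rw [Nat.choose_eq_descFactorial_div_factorial]; rfl
  norm_num [Finset.sum_range_succ, E0, E2, E4, E6, E8, E10, E12, E14, E16, E18, E20, E22, E24, E26, c0, c1, c2, c3, c4, c5, c6, c7, c8, c9, c10, c11, c12, c13] at h
  omega

lemma euler_main (r : ℕ) : ((eulerE (2*r) : ℤ) : ZMod 1024) = ((Ppoly r : ℤ) : ZMod 1024) := by
  induction r using Nat.strong_induction_on with
  | _ r IH =>
    rcases lt_or_ge r 15 with h | h
    · interval_cases r <;>
        norm_num [E0, E2, E4, E6, E8, E10, E12, E14, E16, E18, E20, E22, E24, E26, E28, Ppoly] <;>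
        decide
    · have h2 : 2*r = 2*(r-1)+2 := by omega
      rw [h2, eulerE_rec (r-1), show 2*(r-1)+2 = 2*r from by omega, show r-1+1 = r from by omega]
      push_cast
      have hs : ∀ s ∈ Finset.range r, (((2*r).choose (2*s) : ZMod 1024)) * ((eulerE (2*s) : ℤ) : ZMod 1024)
          = (((2*r).choose (2*s) : ZMod 1024)) * ((Ppoly s : ℤ) : ZMod 1024) := by
        intro s hsmem
        rw [IH s (Finset.mem_range.mp hsmem)]
      have hk : ((∑ s ∈ Finset.range (r+1), ((2*r).choose (2*s) : ℤ) * Ppoly s : ℤ) : ZMod 1024) = 0 := by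
        rw [ZMod.intCast_zmod_eq_zero_iff_dvd]
        exact_mod_cast key r h
      rw [Finset.sum_range_succ, Nat.choose_self] at hk
      push_cast at hk
      rw [Finset.sum_congr rfl hs]
      linear_combination -hk

theorem eulerE_mod_1024_of_four_dvd (b : ℕ) (hb : Even b) (h4 : 4 ∣ b) :
    eulerE b ≡ 1 - 11 * (b : ℤ) + 15 * (b : ℤ) ^ 2 + (b : ℤ) ^ 3 - (b : ℤ) ^ 4
      [ZMOD 2 ^ 10] := by
  obtain ⟨k, hk⟩ := h4
  subst hk
  have hmain := euler_main (2*k)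
  rw [show 2*(2*k) = 4*k from by ring] at hmain
  have hpp : Ppoly (2*k) = 1 - 11 * ((4*k : ℕ) : ℤ) + 15 * ((4*k:ℕ) : ℤ)^2 + ((4*k:ℕ):ℤ)^3 - ((4*k:ℕ):ℤ)^4 := by
    rw [Ppoly, if_pos ⟨k, by ring⟩]
    push_cast
    ring
  rw [hpp] at hmain
  have hfin := (ZMod.intCast_eq_intCast_iff _ _ 1024).mp hmain
  rw [show ((2:ℤ)^10) = ((1024:ℕ):ℤ) from by norm_num]
  exact hfin
end

section
/- Let b be a nonnegative even integer with 4 | (b - 2). Then E_b ≡ 289 - 91b - 17b^2 - 7b^3 + b^4 (mod 2^{10}). -/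
open Finset

def Se (M : ℕ) : ℤ := ∑ r ∈ range (M+1), (M.choose (2*r) : ℤ)
def So (M : ℕ) : ℤ := ∑ r ∈ range (M+1), (M.choose (2*r+1) : ℤ)
def Ce (M : ℕ) : ℤ := ∑ r ∈ range (M+1), (-1)^r * (M.choose (2*r) : ℤ)
def Co (M : ℕ) : ℤ := ∑ r ∈ range (M+1), (-1)^r * (M.choose (2*r+1) : ℤ)

lemma choose_big {M j : ℕ} (h : M < j) : (M.choose j : ℤ) = 0 := by
  rw [Nat.choose_eq_zero_of_lt h]; rfl

lemma shiftSe (M : ℕ) : ∑ i ∈ range (M+1), (M.choose (2*i+2) : ℤ) = Se M - 1 := by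
  have hCe : Se M = (∑ k ∈ range M, (M.choose (2*(k+1)) : ℤ)) + 1 := by
    unfold Se
    rw [Finset.sum_range_succ' (fun r => (M.choose (2*r) : ℤ)) M]
    norm_num
  rw [Finset.sum_range_succ, choose_big (j := 2*M+2) (by omega), hCe]
  have : ∀ k ∈ range M, (M.choose (2*(k+1)) : ℤ) = (M.choose (2*k+2) : ℤ) := by
    intro k _
    have h : 2*(k+1) = 2*k+2 := by ring
    rw [h]
  rw [Finset.sum_congr rfl this]
  ring

lemma shiftCe (M : ℕ) : ∑ i ∈ range (M+1), (-1:ℤ)^i * (M.choose (2*i+2) : ℤ) = 1 - Ce M := by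
  have hCe : Ce M = (∑ k ∈ range M, (-1:ℤ)^(k+1) * (M.choose (2*(k+1)) : ℤ)) + 1 := by
    unfold Ce
    rw [Finset.sum_range_succ' (fun r => (-1:ℤ)^r * (M.choose (2*r) : ℤ)) M]
    norm_num
  have htop : (-1:ℤ)^M * (M.choose (2*M+2) : ℤ) = 0 := by
    rw [choose_big (by omega)]; ring
  rw [Finset.sum_range_succ, htop, add_zero, hCe]
  have : ∀ k ∈ range M, (-1:ℤ)^(k+1) * (M.choose (2*(k+1)) : ℤ)
      = -((-1:ℤ)^k * (M.choose (2*k+2) : ℤ)) := by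
    intro k _
    have : 2*(k+1) = 2*k+2 := by ring
    rw [this]; ring
  rw [Finset.sum_congr rfl this, Finset.sum_neg_distrib]
  ring

lemma So_succ (M : ℕ) : So (M+1) = Se M + So M := by
  unfold So Se
  rw [Finset.sum_range_succ, choose_big (j := 2*(M+1)+1) (by omega), add_zero]
  have : ∀ r ∈ range (M+1), ((M+1).choose (2*r+1) : ℤ)
      = (M.choose (2*r) : ℤ) + (M.choose (2*r+1) : ℤ) := by
    intro r _
    rw [Nat.choose_succ_succ]
    push_cast; ring
  rw [Finset.sum_congr rfl this, Finset.sum_add_distrib]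

lemma Co_succ (M : ℕ) : Co (M+1) = Ce M + Co M := by
  unfold Co Ce
  rw [Finset.sum_range_succ, choose_big (j := 2*(M+1)+1) (by omega), mul_zero, add_zero]
  have : ∀ r ∈ range (M+1), (-1:ℤ)^r * ((M+1).choose (2*r+1) : ℤ)
      = (-1)^r * (M.choose (2*r) : ℤ) + (-1)^r * (M.choose (2*r+1) : ℤ) := by
    intro r _
    rw [Nat.choose_succ_succ]
    push_cast; ring
  rw [Finset.sum_congr rfl this, Finset.sum_add_distrib]

lemma Se_succ (M : ℕ) : Se (M+1) = Se M + So M := by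
  unfold Se
  rw [Finset.sum_range_succ' (fun r => ((M+1).choose (2*r) : ℤ)) (M+1)]
  have h1 : ∀ i ∈ range (M+1), ((M+1).choose (2*(i+1)) : ℤ)
      = (M.choose (2*i+1) : ℤ) + (M.choose (2*i+2) : ℤ) := by
    intro i _
    have : 2*(i+1) = (2*i+1)+1 := by ring
    rw [this, Nat.choose_succ_succ]
    push_cast; ring
  rw [Finset.sum_congr rfl h1, Finset.sum_add_distrib, shiftSe]
  simp only [mul_zero, Nat.choose_zero_right, Nat.cast_one]
  have e1 : ∑ x ∈ range (M+1), (M.choose (2*x+1) : ℤ) = So M := rfl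
  have e2 : ∑ x ∈ range (M+1), (M.choose (2*x) : ℤ) = Se M := rfl
  rw [e1]
  show _ = Se M + So M
  ring

lemma Ce_succ (M : ℕ) : Ce (M+1) = Ce M - Co M := by
  unfold Ce
  rw [Finset.sum_range_succ' (fun r => (-1:ℤ)^r * ((M+1).choose (2*r) : ℤ)) (M+1)]
  have h1 : ∀ i ∈ range (M+1), (-1:ℤ)^(i+1) * ((M+1).choose (2*(i+1)) : ℤ)
      = -((-1)^i * (M.choose (2*i+1) : ℤ)) + -((-1)^i * (M.choose (2*i+2) : ℤ)) := by
    intro i _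
    have : 2*(i+1) = (2*i+1)+1 := by ring
    rw [this, Nat.choose_succ_succ]
    push_cast; ring
  rw [Finset.sum_congr rfl h1, Finset.sum_add_distrib, Finset.sum_neg_distrib,
    Finset.sum_neg_distrib, shiftCe]
  simp only [mul_zero, Nat.choose_zero_right, Nat.cast_one, pow_zero, mul_one]
  have e1 : ∑ x ∈ range (M+1), (-1:ℤ)^x * (M.choose (2*x+1) : ℤ) = Co M := rfl
  rw [e1]
  show _ = Ce M - Co M
  ring

lemma Se_one : Se 1 = 1 := by simp [Se, Finset.sum_range_succ]
lemma So_one : So 1 = 1 := by simp [So, Finset.sum_range_succ]; decide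

lemma SeSo_val (M : ℕ) : Se (M+1) = 2^M ∧ So (M+1) = 2^M := by
  induction M with
  | zero => exact ⟨Se_one, So_one⟩
  | succ M ih =>
    obtain ⟨h1, h2⟩ := ih
    constructor
    · rw [Se_succ, h1, h2]; ring
    · rw [So_succ, h1, h2]; ring

lemma CeCo_dvd (M : ℕ) : (2:ℤ)^(M/2) ∣ Ce M ∧ (2:ℤ)^(M/2) ∣ Co M := by
  induction M using Nat.strong_induction_on with
  | _ M ih =>
    match M with
    | 0 => constructor <;> simp
    | 1 => constructor <;> simp
    | (M+2) =>
      obtain ⟨⟨a, ha⟩, ⟨b, hb⟩⟩ := ih M (by omega)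
      have e1 : Ce (M+2) = -2 * Co M := by rw [Ce_succ, Ce_succ, Co_succ]; ring
      have e2 : Co (M+2) = 2 * Ce M := by rw [Co_succ, Ce_succ, Co_succ]; ring
      have hd : (M+2)/2 = M/2 + 1 := by omega
      rw [e1, e2, hd, pow_succ, ha, hb]
      exact ⟨⟨-b, by ring⟩, ⟨a, by ring⟩⟩


def GSe (s : ℤ) (M : ℕ) : ℤ := ∑ r ∈ range (M+1), s^r * (M.choose (2*r) : ℤ)
def GSo (s : ℤ) (M : ℕ) : ℤ := ∑ r ∈ range (M+1), s^r * (M.choose (2*r+1) : ℤ)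

lemma glem0 (s : ℤ) (n : ℕ) :
    ∑ r ∈ range (n+1), s^r * ((2*n).choose (2*r) : ℤ) = GSe s (2*n) := by
  unfold GSe
  apply Finset.sum_subset (Finset.range_subset_range.2 (by omega))
  intro r _ hnr
  simp only [mem_range] at hnr
  rw [choose_big (by omega)]
  ring

lemma glem1 (s : ℤ) (m : ℕ) :
    2 * ∑ r ∈ range (m+2), s^r * ((2*m+2).choose (2*r) : ℤ) * r
      = s * (2*m+2) * GSo s (2*m+1) := by
  rw [Finset.mul_sum,
    Finset.sum_range_succ' (fun r => 2 * (s^r * ((2*m+2).choose (2*r) : ℤ) * r)) (m+1)]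
  have key : ∀ i ∈ range (m+1), 2 * (s^(i+1) * ((2*m+2).choose (2*(i+1)) : ℤ) * ((i+1 : ℕ) : ℤ))
      = s * (2*m+2) * (s^i * ((2*m+1).choose (2*i+1) : ℤ)) := by
    intro i _
    have h := Nat.add_one_mul_choose_eq (2*m+1) (2*i+1)
    have h1 : (2*m+1).succ = 2*m+2 := rfl
    have h2 : (2*i+1).succ = 2*(i+1) := by omega
    rw [show 2*m+1+1 = 2*m+2 from h1, show 2*i+1+1 = 2*(i+1) from h2] at h
    have h' : ((2*m+2 : ℕ) : ℤ) * ((2*m+1).choose (2*i+1) : ℤ)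
        = ((2*m+2).choose (2*(i+1)) : ℤ) * (2*(i+1) : ℕ) := by exact_mod_cast congrArg (Nat.cast : ℕ → ℤ) h
    push_cast at h' ⊢
    linear_combination (-s^(i+1)) * h'
  rw [Finset.sum_congr rfl key]
  have : ∑ i ∈ range (m+1), s * (2*m+2) * (s^i * ((2*m+1).choose (2*i+1) : ℤ))
      = s * (2*m+2) * ∑ i ∈ range (m+1), s^i * ((2*m+1).choose (2*i+1) : ℤ) := by
    rw [Finset.mul_sum]
  rw [this]
  have ext : ∑ i ∈ range (m+1), s^i * ((2*m+1).choose (2*i+1) : ℤ) = GSo s (2*m+1) := by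
    unfold GSo
    apply Finset.sum_subset (Finset.range_subset_range.2 (by omega))
    intro r _ hnr
    simp only [mem_range] at hnr
    rw [choose_big (by omega)]
    ring
  rw [ext]
  norm_num

lemma glem2 (s : ℤ) (m : ℕ) :
    ∑ r ∈ range (m+2), s^r * ((2*m+2).choose (2*r) : ℤ) * ((2*r).choose 2 : ℤ)
      = s * ((2*m+2).choose 2 : ℤ) * GSe s (2*m) := by
  rw [Finset.sum_range_succ'
    (fun r => s^r * ((2*m+2).choose (2*r) : ℤ) * ((2*r).choose 2 : ℤ)) (m+1)]
  have key : ∀ i ∈ range (m+1),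
      s^(i+1) * ((2*m+2).choose (2*(i+1)) : ℤ) * ((2*(i+1)).choose 2 : ℤ)
      = s * ((2*m+2).choose 2 : ℤ) * (s^i * ((2*m).choose (2*i) : ℤ)) := by
    intro i hi
    simp only [mem_range] at hi
    have h := Nat.choose_mul (n := 2*m+2) (k := 2*(i+1)) (s := 2) (by omega)
    have h1 : 2*m+2-2 = 2*m := by omega
    have h2 : 2*(i+1)-2 = 2*i := by omega
    rw [h1, h2] at h
    have h' : ((2*m+2).choose (2*(i+1)) : ℤ) * ((2*(i+1)).choose 2 : ℤ)
        = ((2*m+2).choose 2 : ℤ) * ((2*m).choose (2*i) : ℤ) := by exact_mod_cast congrArg (Nat.cast : ℕ → ℤ) h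
    linear_combination s^(i+1) * h'
  rw [Finset.sum_congr rfl key]
  have : ∑ i ∈ range (m+1), s * ((2*m+2).choose 2 : ℤ) * (s^i * ((2*m).choose (2*i) : ℤ))
      = s * ((2*m+2).choose 2 : ℤ) * ∑ i ∈ range (m+1), s^i * ((2*m).choose (2*i) : ℤ) := by
    rw [Finset.mul_sum]
  rw [this, glem0]
  norm_num

lemma glem3 (s : ℤ) (m : ℕ) :
    ∑ r ∈ range (m+3), s^r * ((2*m+4).choose (2*r) : ℤ) * ((2*r).choose 3 : ℤ)
      = s^2 * ((2*m+4).choose 3 : ℤ) * GSo s (2*m+1) := by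
  rw [Finset.sum_range_succ'
    (fun r => s^r * ((2*m+4).choose (2*r) : ℤ) * ((2*r).choose 3 : ℤ)) (m+2),
    Finset.sum_range_succ'
    (fun i => s^(i+1) * ((2*m+4).choose (2*(i+1)) : ℤ) * ((2*(i+1)).choose 3 : ℤ)) (m+1)]
  have key : ∀ i ∈ range (m+1),
      s^(i+1+1) * ((2*m+4).choose (2*(i+1+1)) : ℤ) * ((2*(i+1+1)).choose 3 : ℤ)
      = s^2 * ((2*m+4).choose 3 : ℤ) * (s^i * ((2*m+1).choose (2*i+1) : ℤ)) := by
    intro i hi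
    simp only [mem_range] at hi
    have h := Nat.choose_mul (n := 2*m+4) (k := 2*(i+2)) (s := 3) (by omega)
    have h1 : 2*m+4-3 = 2*m+1 := by omega
    have h2 : 2*(i+2)-3 = 2*i+1 := by omega
    rw [h1, h2] at h
    have h' : ((2*m+4).choose (2*(i+2)) : ℤ) * ((2*(i+2)).choose 3 : ℤ)
        = ((2*m+4).choose 3 : ℤ) * ((2*m+1).choose (2*i+1) : ℤ) := by exact_mod_cast congrArg (Nat.cast : ℕ → ℤ) h
    have h3 : (i+1+1) = i+2 := by omega
    rw [h3]
    linear_combination s^(i+2) * h'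
  rw [Finset.sum_congr rfl key]
  have : ∑ i ∈ range (m+1), s^2 * ((2*m+4).choose 3 : ℤ) * (s^i * ((2*m+1).choose (2*i+1) : ℤ))
      = s^2 * ((2*m+4).choose 3 : ℤ) * ∑ i ∈ range (m+1), s^i * ((2*m+1).choose (2*i+1) : ℤ) := by
    rw [Finset.mul_sum]
  rw [this]
  have ext : ∑ i ∈ range (m+1), s^i * ((2*m+1).choose (2*i+1) : ℤ) = GSo s (2*m+1) := by
    unfold GSo
    apply Finset.sum_subset (Finset.range_subset_range.2 (by omega))
    intro r _ hnr
    simp only [mem_range] at hnr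
    rw [choose_big (by omega)]
    ring
  rw [ext]
  norm_num

lemma glem4 (s : ℤ) (m : ℕ) :
    ∑ r ∈ range (m+3), s^r * ((2*m+4).choose (2*r) : ℤ) * ((2*r).choose 4 : ℤ)
      = s^2 * ((2*m+4).choose 4 : ℤ) * GSe s (2*m) := by
  rw [Finset.sum_range_succ'
    (fun r => s^r * ((2*m+4).choose (2*r) : ℤ) * ((2*r).choose 4 : ℤ)) (m+2),
    Finset.sum_range_succ'
    (fun i => s^(i+1) * ((2*m+4).choose (2*(i+1)) : ℤ) * ((2*(i+1)).choose 4 : ℤ)) (m+1)]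
  have key : ∀ i ∈ range (m+1),
      s^(i+1+1) * ((2*m+4).choose (2*(i+1+1)) : ℤ) * ((2*(i+1+1)).choose 4 : ℤ)
      = s^2 * ((2*m+4).choose 4 : ℤ) * (s^i * ((2*m).choose (2*i) : ℤ)) := by
    intro i hi
    simp only [mem_range] at hi
    have h := Nat.choose_mul (n := 2*m+4) (k := 2*(i+2)) (s := 4) (by omega)
    have h1 : 2*m+4-4 = 2*m := by omega
    have h2 : 2*(i+2)-4 = 2*i := by omega
    rw [h1, h2] at h
    have h' : ((2*m+4).choose (2*(i+2)) : ℤ) * ((2*(i+2)).choose 4 : ℤ)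
        = ((2*m+4).choose 4 : ℤ) * ((2*m).choose (2*i) : ℤ) := by exact_mod_cast congrArg (Nat.cast : ℕ → ℤ) h
    have h3 : (i+1+1) = i+2 := by omega
    rw [h3]
    linear_combination s^(i+2) * h'
  rw [Finset.sum_congr rfl key]
  have : ∑ i ∈ range (m+1), s^2 * ((2*m+4).choose 4 : ℤ) * (s^i * ((2*m).choose (2*i) : ℤ))
      = s^2 * ((2*m+4).choose 4 : ℤ) * ∑ i ∈ range (m+1), s^i * ((2*m).choose (2*i) : ℤ) := by
    rw [Finset.mul_sum]
  rw [this, glem0]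
  norm_num
  exact Or.inr (by decide)



lemma ch2 (r : ℕ) : (((2*r).choose 2 : ℕ) : ℤ) = 2*(r:ℤ)^2 - r := by
  induction r with
  | zero => simp
  | succ r ih =>
    have h : 2*(r+1) = (2*r+1)+1 := by ring
    rw [h, Nat.choose_succ_succ, Nat.choose_succ_succ (2*r) 0, Nat.choose_succ_succ (2*r) 1]
    simp only [Nat.choose_zero_right, Nat.choose_one_right]
    push_cast
    linarith [ih]

lemma ch3 (r : ℕ) : (6:ℤ) * ((2*r).choose 3 : ℕ) = 8*(r:ℤ)^3 - 12*(r:ℤ)^2 + 4*r := by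
  induction r with
  | zero => simp
  | succ r ih =>
    have h : 2*(r+1) = (2*r+1)+1 := by ring
    rw [h, Nat.choose_succ_succ _ 2, Nat.choose_succ_succ (2*r) 1, Nat.choose_succ_succ (2*r) 2]
    simp only [Nat.choose_one_right]
    push_cast
    have h2 := ch2 r
    nlinarith [ih, h2]

lemma ch4 (r : ℕ) : (6:ℤ) * ((2*r).choose 4 : ℕ) = 4*(r:ℤ)^4 - 12*(r:ℤ)^3 + 11*(r:ℤ)^2 - 3*r := by
  induction r with
  | zero => simp
  | succ r ih =>
    have h : 2*(r+1) = (2*r+1)+1 := by ring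
    rw [h, Nat.choose_succ_succ _ 3, Nat.choose_succ_succ (2*r) 2, Nat.choose_succ_succ (2*r) 3]
    push_cast
    have h2 := ch2 r
    have h3 := ch3 r
    nlinarith [ih, h2, h3]

def F (r : ℕ) : ℤ :=
  8*(r:ℤ)^4 - 24*(r:ℤ)^3 - 36*(r:ℤ)^2 - 102*(r:ℤ) + 145
    + (-1)^r * (-8*(r:ℤ)^4 + 32*(r:ℤ)^3 + 32*(r:ℤ)^2 + 80*(r:ℤ) - 144)

lemma GSe_one (M : ℕ) : GSe 1 M = Se M := by
  unfold GSe Se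
  exact Finset.sum_congr rfl (fun r _ => by rw [one_pow, one_mul])

lemma GSo_one (M : ℕ) : GSo 1 M = So M := by
  unfold GSo So
  exact Finset.sum_congr rfl (fun r _ => by rw [one_pow, one_mul])

lemma GSe_neg (M : ℕ) : GSe (-1) M = Ce M := rfl
lemma GSo_neg (M : ℕ) : GSo (-1) M = Co M := rfl

set_option maxHeartbeats 1000000 in
lemma keyBig (m : ℕ) :
    (1024:ℤ) ∣ ∑ r ∈ range (m+13), ((2*m+24).choose (2*r) : ℤ) * F r := by
  -- specialized glem instances with normalized shapes
  have g0p := glem0 1 (m+12)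
  have g0m := glem0 (-1) (m+12)
  rw [show m+12+1 = m+13 by omega, show 2*(m+12) = 2*m+24 by omega] at g0p g0m
  have g1p := glem1 1 (m+11)
  have g1m := glem1 (-1) (m+11)
  rw [show m+11+2 = m+13 by omega, show 2*(m+11)+2 = 2*m+24 by omega,
      show 2*(m+11)+1 = 2*m+23 by omega] at g1p g1m
  have g2p := glem2 1 (m+11)
  have g2m := glem2 (-1) (m+11)
  rw [show m+11+2 = m+13 by omega, show 2*(m+11)+2 = 2*m+24 by omega,
      show 2*(m+11) = 2*m+22 by omega] at g2p g2m
  have g3m := glem3 (-1) (m+10)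
  rw [show m+10+3 = m+13 by omega, show 2*(m+10)+4 = 2*m+24 by omega,
      show 2*(m+10)+1 = 2*m+21 by omega] at g3m
  have g4p := glem4 1 (m+10)
  have g4m := glem4 (-1) (m+10)
  rw [show m+10+3 = m+13 by omega, show 2*(m+10)+4 = 2*m+24 by omega,
      show 2*(m+10) = 2*m+20 by omega] at g4p g4m
  -- pointwise decomposition
  have pointwise : ∀ r ∈ range (m+13),
      2 * (((2*m+24).choose (2*r) : ℤ) * F r)
      = 290*((1:ℤ)^r * ((2*m+24).choose (2*r) : ℤ))
      + (-125)*(2*((1:ℤ)^r * ((2*m+24).choose (2*r) : ℤ) * r))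
      + (-58)*((1:ℤ)^r * ((2*m+24).choose (2*r) : ℤ) * ((2*r).choose 2 : ℤ))
      + 24*((1:ℤ)^r * ((2*m+24).choose (2*r) : ℤ) * ((2*r).choose 4 : ℤ))
      + (-288)*((-1:ℤ)^r * ((2*m+24).choose (2*r) : ℤ))
      + 103*(2*((-1:ℤ)^r * ((2*m+24).choose (2*r) : ℤ) * r))
      + 66*((-1:ℤ)^r * ((2*m+24).choose (2*r) : ℤ) * ((2*r).choose 2 : ℤ))
      + 12*((-1:ℤ)^r * ((2*m+24).choose (2*r) : ℤ) * ((2*r).choose 3 : ℤ))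
      + (-24)*((-1:ℤ)^r * ((2*m+24).choose (2*r) : ℤ) * ((2*r).choose 4 : ℤ)) := by
    intro r _
    have h2 := ch2 r
    have h3 := ch3 r
    have h4 := ch4 r
    unfold F
    linear_combination ((58 - 66*(-1:ℤ)^r) * ((2*m+24).choose (2*r) : ℤ)) * h2
      + ((-2)*(-1:ℤ)^r * ((2*m+24).choose (2*r) : ℤ)) * h3
      + ((-4 + 4*(-1:ℤ)^r) * ((2*m+24).choose (2*r) : ℤ)) * h4
  have split : 2 * ∑ r ∈ range (m+13), ((2*m+24).choose (2*r) : ℤ) * F r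
      = 290*(∑ r ∈ range (m+13), (1:ℤ)^r * ((2*m+24).choose (2*r) : ℤ))
      + (-125)*(2*(∑ r ∈ range (m+13), (1:ℤ)^r * ((2*m+24).choose (2*r) : ℤ) * r))
      + (-58)*(∑ r ∈ range (m+13), (1:ℤ)^r * ((2*m+24).choose (2*r) : ℤ) * ((2*r).choose 2 : ℤ))
      + 24*(∑ r ∈ range (m+13), (1:ℤ)^r * ((2*m+24).choose (2*r) : ℤ) * ((2*r).choose 4 : ℤ))
      + (-288)*(∑ r ∈ range (m+13), (-1:ℤ)^r * ((2*m+24).choose (2*r) : ℤ))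
      + 103*(2*(∑ r ∈ range (m+13), (-1:ℤ)^r * ((2*m+24).choose (2*r) : ℤ) * r))
      + 66*(∑ r ∈ range (m+13), (-1:ℤ)^r * ((2*m+24).choose (2*r) : ℤ) * ((2*r).choose 2 : ℤ))
      + 12*(∑ r ∈ range (m+13), (-1:ℤ)^r * ((2*m+24).choose (2*r) : ℤ) * ((2*r).choose 3 : ℤ))
      + (-24)*(∑ r ∈ range (m+13), (-1:ℤ)^r * ((2*m+24).choose (2*r) : ℤ) * ((2*r).choose 4 : ℤ)) := by
    rw [Finset.mul_sum, Finset.sum_congr rfl pointwise]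
    simp only [Finset.sum_add_distrib, ← Finset.mul_sum]
  -- values
  obtain ⟨a0, e0⟩ : (2:ℤ)^(m+12) ∣ Ce (2*m+24) := by
    have h := (CeCo_dvd (2*m+24)).1
    rwa [show (2*m+24)/2 = m+12 by omega] at h
  obtain ⟨a1, e1⟩ : (2:ℤ)^(m+11) ∣ Co (2*m+23) := by
    have h := (CeCo_dvd (2*m+23)).2
    rwa [show (2*m+23)/2 = m+11 by omega] at h
  obtain ⟨a2, e2⟩ : (2:ℤ)^(m+11) ∣ Ce (2*m+22) := by
    have h := (CeCo_dvd (2*m+22)).1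
    rwa [show (2*m+22)/2 = m+11 by omega] at h
  obtain ⟨a3, e3⟩ : (2:ℤ)^(m+10) ∣ Co (2*m+21) := by
    have h := (CeCo_dvd (2*m+21)).2
    rwa [show (2*m+21)/2 = m+10 by omega] at h
  obtain ⟨a4, e4⟩ : (2:ℤ)^(m+10) ∣ Ce (2*m+20) := by
    have h := (CeCo_dvd (2*m+20)).1
    rwa [show (2*m+20)/2 = m+10 by omega] at h
  have v0 : Se (2*m+24) = 2^(2*m+23) := by
    have h := (SeSo_val (2*m+23)).1
    rwa [show 2*m+23+1 = 2*m+24 by omega] at h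
  have v1 : So (2*m+23) = 2^(2*m+22) := by
    have h := (SeSo_val (2*m+22)).2
    rwa [show 2*m+22+1 = 2*m+23 by omega] at h
  have v2 : Se (2*m+22) = 2^(2*m+21) := by
    have h := (SeSo_val (2*m+21)).1
    rwa [show 2*m+21+1 = 2*m+22 by omega] at h
  have v4 : Se (2*m+20) = 2^(2*m+19) := by
    have h := (SeSo_val (2*m+19)).1
    rwa [show 2*m+19+1 = 2*m+20 by omega] at h
  -- substitute values into glem instances
  rw [GSe_one, v0] at g0p
  rw [GSe_neg, e0] at g0m
  rw [GSo_one, v1] at g1p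
  rw [GSo_neg, e1] at g1m
  rw [GSe_one, v2] at g2p
  rw [GSe_neg, e2] at g2m
  rw [GSo_neg, e3] at g3m
  rw [GSe_one, v4] at g4p
  rw [GSe_neg, e4] at g4m
  -- conclude
  have h2048 : (2048:ℤ) ∣ 2 * ∑ r ∈ range (m+13), ((2*m+24).choose (2*r) : ℤ) * F r := by
    rw [split, g0p, g1p, g2p, g4p, g0m, g1m, g2m, g3m, g4m]
    refine dvd_add (dvd_add (dvd_add (dvd_add (dvd_add (dvd_add (dvd_add (dvd_add ?_ ?_) ?_) ?_) ?_) ?_) ?_) ?_) ?_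
    · exact ⟨290*2^(2*m+12), by ring⟩
    · exact ⟨-125*(1*(2*((m:ℤ)+11)+2)*2^(2*m+11)), by push_cast; ring⟩
    · exact ⟨-58*(1*(((2*m+24).choose 2 : ℕ):ℤ)*2^(2*m+10)), by push_cast; ring⟩
    · exact ⟨24*(1^2*(((2*m+24).choose 4 : ℕ):ℤ)*2^(2*m+8)), by push_cast; ring⟩
    · exact ⟨-288*(2^(m+1)*a0), by push_cast; ring⟩
    · exact ⟨103*(-1*(2*((m:ℤ)+11)+2)*(2^m*a1)), by push_cast; ring⟩
    · exact ⟨66*(-1*(((2*m+24).choose 2 : ℕ):ℤ)*(2^m*a2)), by push_cast; ring⟩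
    · exact ⟨3*((((2*m+24).choose 3 : ℕ):ℤ)*(2^(m+1)*a3)), by push_cast; ring⟩
    · exact ⟨-3*((((2*m+24).choose 4 : ℕ):ℤ)*(2^(m+2)*a4)), by push_cast; ring⟩
  have h' : (2:ℤ)*1024 ∣ 2 * ∑ r ∈ range (m+13), ((2*m+24).choose (2*r) : ℤ) * F r := by
    rw [show (2:ℤ)*1024 = 2048 by norm_num]
    exact h2048
  exact (mul_dvd_mul_iff_left (a := (2:ℤ)) two_ne_zero).mp h'

lemma keyS (n : ℕ) (hn : 1 ≤ n) :
    (1024:ℤ) ∣ ∑ r ∈ range (n+1), ((2*n).choose (2*r) : ℤ) * F r := by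
  by_cases h : n < 12
  · interval_cases n <;>
      (simp only [Finset.sum_range_succ, Finset.sum_range_zero, F]; norm_num [Nat.choose])
  · obtain ⟨m, rfl⟩ : ∃ m, n = m+12 := ⟨n-12, by omega⟩
    rw [show m+12+1 = m+13 by omega, show 2*(m+12) = 2*m+24 by omega]
    exact keyBig m

lemma main' : ∀ r : ℕ, ((eulerE (2*r) : ℤ) : ZMod 1024) = ((F r : ℤ) : ZMod 1024) := by
  intro r
  induction r using Nat.strong_induction_on with
  | _ r ih =>
    match r with
    | 0 =>
      show ((eulerE 0 : ℤ) : ZMod 1024) = _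
      rw [eulerE]
      norm_num [F]
    | (k+1) =>
      have hrec : eulerE (2*(k+1))
          = -∑ j ∈ range (k+1), ((2*k+2).choose (2*j) : ℤ) * eulerE (2*j) := by
        rw [show 2*(k+1) = (2*k)+2 by ring, eulerE, if_pos (even_two_mul k),
          Finset.sum_attach (Finset.range (2*k/2+1))
            (fun j => ((2*k+2).choose (2*j) : ℤ) * eulerE (2*j)),
          Nat.mul_div_cancel_left k (by norm_num)]
      have hkey := keyS (k+1) (by omega)
      rw [show k+1+1 = k+2 by omega, show 2*(k+1) = 2*k+2 by omega] at hkey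
      have hsum : ((∑ r ∈ range (k+2), ((2*k+2).choose (2*r) : ℤ) * F r : ℤ) : ZMod 1024) = 0 := by
        rw [ZMod.intCast_zmod_eq_zero_iff_dvd]
        exact_mod_cast hkey
      push_cast at hsum
      rw [Finset.sum_range_succ, show 2*(k+1) = 2*k+2 by omega, Nat.choose_self] at hsum
      have e1 : ((eulerE (2*(k+1)) : ℤ) : ZMod 1024)
          = -∑ j ∈ range (k+1), ((2*k+2).choose (2*j) : ZMod 1024) * ((eulerE (2*j) : ℤ) : ZMod 1024) := by
        rw [hrec]; push_cast; ring
      have e2 : ∀ j ∈ range (k+1),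
          ((2*k+2).choose (2*j) : ZMod 1024) * ((eulerE (2*j) : ℤ) : ZMod 1024)
          = ((2*k+2).choose (2*j) : ZMod 1024) * ((F j : ℤ) : ZMod 1024) :=
        fun j hj => by rw [ih j (mem_range.mp hj)]
      rw [e1, Finset.sum_congr rfl e2]
      push_cast at hsum ⊢
      linear_combination (-1 : ZMod 1024) * hsum

theorem eulerE_mod_1024_of_four_dvd_sub_two (b : ℕ) (hb : Even b)
    (h4 : (4 : ℤ) ∣ ((b : ℤ) - 2)) :
    eulerE b ≡ 289 - 91 * (b : ℤ) - 17 * (b : ℤ) ^ 2 - 7 * (b : ℤ) ^ 3 + (b : ℤ) ^ 4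
      [ZMOD 2 ^ 10] := by
  obtain ⟨t, ht⟩ := hb
  have hr : b = 2*t := by omega
  have hodd : Odd t := by
    rcases Nat.even_or_odd t with he | ho
    · exfalso
      obtain ⟨u, hu⟩ := he
      have hb4 : (b : ℤ) = 4*u := by rw [hr, hu]; push_cast; ring
      rw [hb4] at h4
      omega
    · exact ho
  have hm : eulerE (2*t) ≡ F t [ZMOD (1024:ℕ)] :=
    (ZMod.intCast_eq_intCast_iff _ _ _).mp (main' t)
  have hFP : F t = 289 - 91*(2*(t:ℤ)) - 17*(2*(t:ℤ))^2 - 7*(2*(t:ℤ))^3 + (2*(t:ℤ))^4 := by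
    unfold F
    rw [hodd.neg_one_pow]
    ring
  rw [hFP] at hm
  have hbz : (b : ℤ) = 2*(t:ℤ) := by rw [hr]; push_cast; ring
  rw [hr]
  push_cast
  have hmod : ((1024:ℕ):ℤ) = 2^10 := by norm_num
  rw [hmod] at hm
  exact hm
end
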